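/- The function u ↦ ln(u) − (1/2)·ln(u² + 1) − arctan(1/u) is strictly increasing on (0, ∞). Consequently, if y1 and y2 are nonzero real numbers with ln(y1²) − (1/2)·ln(y1⁴ + 1) − arctan(1/y1²) = ln(y2²) − (1/2)·ln(y2⁴ + 1) − arctan(1/y2²), then y1² = y2². -/

import Mathlib

lemma stmt14_deriv {u : ℝ} (hu : 0 < u) :
    HasDerivAt (fun u : ℝ => Real.log u - (1/2) * Real.log (u ^ 2 + 1) -
        Real.arctan (1 / u)) ((u + 1) / (u * (u ^ 2 + 1))) u := by
  have hu0 : u ≠ 0 := ne_of_gt hu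
  have h1 : HasDerivAt Real.log (1 / u) u := by
    simpa [one_div] using Real.hasDerivAt_log hu0
  have hsq : HasDerivAt (fun u : ℝ => u ^ 2 + 1) (2 * u) u := by
    simpa using (hasDerivAt_pow 2 u).add_const 1
  have h2 : HasDerivAt (fun u : ℝ => Real.log (u ^ 2 + 1)) (2 * u / (u ^ 2 + 1)) u :=
    hsq.log (by positivity)
  have hinv : HasDerivAt (fun u : ℝ => 1 / u) (-(1 / u ^ 2)) u := by
    simpa [one_div] using hasDerivAt_inv hu0
  have h3 : HasDerivAt (fun u : ℝ => Real.arctan (1 / u))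
      ((1 / (1 + (1 / u) ^ 2)) * (-(1 / u ^ 2))) u :=
    (Real.hasDerivAt_arctan (1 / u)).comp u hinv
  have h := (h1.sub (h2.const_mul (1/2))).sub h3
  refine h.congr_deriv ?_
  have h2pos : (0:ℝ) < u ^ 2 + 1 := by positivity
  field_simp
  ring
theorem stmt_14 :
    StrictMonoOn
      (fun u : ℝ => Real.log u - (1/2) * Real.log (u ^ 2 + 1) -
        Real.arctan (1 / u)) (Set.Ioi (0 : ℝ)) ∧
    ∀ y1 y2 : ℝ, y1 ≠ 0 → y2 ≠ 0 →
      Real.log (y1 ^ 2) - (1/2) * Real.log (y1 ^ 4 + 1) -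
        Real.arctan (1 / y1 ^ 2) =
      Real.log (y2 ^ 2) - (1/2) * Real.log (y2 ^ 4 + 1) -
        Real.arctan (1 / y2 ^ 2) →
      y1 ^ 2 = y2 ^ 2 := by
  have hmono : StrictMonoOn
      (fun u : ℝ => Real.log u - (1/2) * Real.log (u ^ 2 + 1) -
        Real.arctan (1 / u)) (Set.Ioi (0 : ℝ)) := by
    apply strictMonoOn_of_deriv_pos (convex_Ioi 0)
    · intro u hu
      exact ((stmt14_deriv hu).differentiableAt.continuousAt).continuousWithinAt
    · intro u hu
      rw [interior_Ioi] at hu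
      have hu' : (0:ℝ) < u := hu
      rw [(stmt14_deriv hu').deriv]
      positivity
  refine ⟨hmono, fun y1 y2 h1 h2 heq => ?_⟩
  have m1 : y1 ^ 2 ∈ Set.Ioi (0:ℝ) := Set.mem_Ioi.mpr (by positivity)
  have m2 : y2 ^ 2 ∈ Set.Ioi (0:ℝ) := Set.mem_Ioi.mpr (by positivity)
  apply hmono.injOn m1 m2
  simp only []
  have e1 : (y1 ^ 2) ^ 2 = y1 ^ 4 := by ring
  have e2 : (y2 ^ 2) ^ 2 = y2 ^ 4 := by ring
  rw [e1, e2]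
  exact heq
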